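/- Let ζ ≥ 0 and let μ and ν be finite ζ-comparable measures on a measurable space X. Then for all measurable sets A, B, C ⊆ X one has α_μ(A,C) ≤ 2·α_μ(A,B) + 2·exp(2ζ)·α_ν(B,C). -/

import Mathlib

open MeasureTheory Real

open Classical in
/-- The discrepancy `α_μ(A,B) = μ(A △ B)/μ(A ∪ B)` when `0 < μ (A ∪ B) < ∞`, and `0`
otherwise. -/
noncomputable def disc {X : Type*} [MeasurableSpace X] (μ : Measure X) (A B : Set X) : ℝ :=
  if 0 < μ (A ∪ B) ∧ μ (A ∪ B) < ⊤ then (μ (symmDiff A B)).toReal / (μ (A ∪ B)).toReal else 0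

/-- Two measures are `ζ`-comparable if each is bounded by `exp ζ` times the other on all
measurable sets. -/
def Comparable {X : Type*} [MeasurableSpace X] (ζ : ℝ) (μ ν : Measure X) : Prop :=
  ∀ S : Set X, MeasurableSet S →
    μ S ≤ ENNReal.ofReal (Real.exp ζ) * ν S ∧ ν S ≤ ENNReal.ofReal (Real.exp ζ) * μ S

lemma disc_nonneg' {X : Type*} [MeasurableSpace X] (μ : Measure X) (A B : Set X) :
    0 ≤ disc μ A B := by
  unfold disc
  split
  · positivity
  · exact le_rfl

lemma disc_le_one' {X : Type*} [MeasurableSpace X] (μ : Measure X) (A B : Set X) :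
    disc μ A B ≤ 1 := by
  unfold disc
  split
  · rename_i h
    apply div_le_one_of_le₀
    · exact ENNReal.toReal_mono h.2.ne (measure_mono symmDiff_le_sup)
    · exact ENNReal.toReal_nonneg
  · norm_num

theorem disc_triangle_estimate {X : Type*} [MeasurableSpace X]
    (ζ : ℝ) (hζ : 0 ≤ ζ)
    (μ ν : Measure X) [IsFiniteMeasure μ] [IsFiniteMeasure ν]
    (hcomp : Comparable ζ μ ν)
    (A B C : Set X) (hA : MeasurableSet A) (hB : MeasurableSet B) (hC : MeasurableSet C) :
    disc μ A C ≤ 2 * disc μ A B + 2 * Real.exp (2 * ζ) * disc ν B C := by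
  have hexp1 : (1:ℝ) ≤ Real.exp ζ := by
    simpa using Real.exp_le_exp.2 hζ
  have hexp2 : (1:ℝ) ≤ Real.exp (2*ζ) := by
    have : (0:ℝ) ≤ 2*ζ := by linarith
    simpa using Real.exp_le_exp.2 this
  have ha0 := disc_nonneg' μ A B
  have hc0 := disc_nonneg' ν B C
  have hAC1 := disc_le_one' μ A C
  -- real-valued measures
  set m : Set X → ℝ := fun S => (μ S).toReal with hm
  set n : Set X → ℝ := fun S => (ν S).toReal with hn
  have hmmono : ∀ {S T : Set X}, S ⊆ T → m S ≤ m T := fun hST =>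
    ENNReal.toReal_mono (measure_ne_top μ _) (measure_mono hST)
  have hmsub : ∀ S T : Set X, m (S ∪ T) ≤ m S + m T := by
    intro S T
    rw [hm]
    rw [← ENNReal.toReal_add (measure_ne_top μ _) (measure_ne_top μ _)]
    exact ENNReal.toReal_mono (by finiteness) (measure_union_le S T)
  have hmn : ∀ S : Set X, MeasurableSet S → m S ≤ Real.exp ζ * n S := by
    intro S hS
    have h := (hcomp S hS).1
    have := ENNReal.toReal_mono (by finiteness) h
    rwa [ENNReal.toReal_mul, ENNReal.toReal_ofReal (Real.exp_pos ζ).le] at this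
  have hnm : ∀ S : Set X, MeasurableSet S → n S ≤ Real.exp ζ * m S := by
    intro S hS
    have h := (hcomp S hS).2
    have := ENNReal.toReal_mono (by finiteness) h
    rwa [ENNReal.toReal_mul, ENNReal.toReal_ofReal (Real.exp_pos ζ).le] at this
  by_cases hAC : 0 < μ (A ∪ C)
  swap
  · -- disc μ A C = 0
    have : disc μ A C = 0 := by unfold disc; rw [if_neg]; tauto
    rw [this]
    have : 0 ≤ 2 * Real.exp (2*ζ) * disc ν B C := by positivity
    linarith
  by_cases ha : 1/2 ≤ disc μ A B
  · have : 0 ≤ 2 * Real.exp (2*ζ) * disc ν B C := by positivity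
    linarith
  push_neg at ha
  by_cases hc : 1/2 ≤ disc ν B C
  · have h1 : Real.exp (2*ζ) ≤ 2 * Real.exp (2*ζ) * disc ν B C := by nlinarith
    linarith
  push_neg at hc
  -- main case
  set a := disc μ A B with hadef
  set c := disc ν B C with hcdef
  have hACpos : 0 < m (A ∪ C) := by
    rw [hm]
    exact ENNReal.toReal_pos hAC.ne' (measure_ne_top μ _)
  -- Step 1 : m (A △ B) ≤ 2 a * m (A ∪ C)
  have hsub1 : A ∪ B ⊆ (A ∪ C) ∪ symmDiff A B := by
    intro x hx
    simp only [Set.mem_union, Set.mem_symmDiff] at *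
    tauto
  have step1 : m (symmDiff A B) ≤ 2 * a * m (A ∪ C) := by
    by_cases hAB : 0 < μ (A ∪ B)
    · have hacond : a = m (symmDiff A B) / m (A ∪ B) := by
        rw [hadef]; unfold disc; rw [if_pos ⟨hAB, measure_lt_top μ _⟩]
      have hABpos : 0 < m (A ∪ B) := ENNReal.toReal_pos hAB.ne' (measure_ne_top μ _)
      have heq : m (symmDiff A B) = a * m (A ∪ B) := by
        rw [hacond]; field_simp
      have h1 : m (A ∪ B) ≤ m (A ∪ C) + m (symmDiff A B) :=
        le_trans (hmmono hsub1) (hmsub _ _)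
      nlinarith [mul_le_mul_of_nonneg_left h1 ha0,
        mul_nonneg (mul_nonneg ha0 hABpos.le) (by linarith : (0:ℝ) ≤ 1 - 2*a)]
    · have : μ (A ∪ B) = 0 := by simpa using hAB
      have : μ (symmDiff A B) = 0 :=
        le_antisymm (this ▸ measure_mono symmDiff_le_sup) zero_le
      have hz : m (symmDiff A B) = 0 := by rw [hm]; simp [this]
      rw [hz]; positivity
  -- Step 2 : m (B △ C) ≤ 2 * exp (2ζ) * c * m (A ∪ C)
  have hsub2 : B ∪ C ⊆ (A ∪ C) ∪ symmDiff A B := by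
    intro x hx
    simp only [Set.mem_union, Set.mem_symmDiff] at *
    tauto
  have hBCbound : m (B ∪ C) ≤ 2 * m (A ∪ C) := by
    have h1 : m (B ∪ C) ≤ m (A ∪ C) + m (symmDiff A B) :=
      le_trans (hmmono hsub2) (hmsub _ _)
    nlinarith
  have step2 : m (symmDiff B C) ≤ 2 * Real.exp (2*ζ) * c * m (A ∪ C) := by
    by_cases hBC : 0 < ν (B ∪ C)
    · have hccond : c = n (symmDiff B C) / n (B ∪ C) := by
        rw [hcdef]; unfold disc; rw [if_pos ⟨hBC, measure_lt_top ν _⟩]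
      have hBCpos : 0 < n (B ∪ C) := ENNReal.toReal_pos hBC.ne' (measure_ne_top ν _)
      have heq : n (symmDiff B C) = c * n (B ∪ C) := by
        rw [hccond]; field_simp
      have h1 : m (symmDiff B C) ≤ Real.exp ζ * n (symmDiff B C) :=
        hmn _ ((hB.symmDiff hC))
      have h2 : n (B ∪ C) ≤ Real.exp ζ * m (B ∪ C) := hnm _ (hB.union hC)
      have h3 : Real.exp ζ * Real.exp ζ = Real.exp (2*ζ) := by
        rw [← Real.exp_add]; ring_nf
      have hepos : (0:ℝ) < Real.exp ζ := Real.exp_pos ζ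
      calc m (symmDiff B C) ≤ Real.exp ζ * (c * n (B ∪ C)) := by rw [← heq]; exact h1
        _ ≤ Real.exp ζ * (c * (Real.exp ζ * (2 * m (A ∪ C)))) := by
            apply mul_le_mul_of_nonneg_left _ hepos.le
            apply mul_le_mul_of_nonneg_left _ hc0
            calc n (B ∪ C) ≤ Real.exp ζ * m (B ∪ C) := h2
              _ ≤ Real.exp ζ * (2 * m (A ∪ C)) :=
                  mul_le_mul_of_nonneg_left hBCbound hepos.le
        _ = 2 * Real.exp (2*ζ) * c * m (A ∪ C) := by rw [← h3]; ring
    · have hz : ν (B ∪ C) = 0 := by simpa using hBC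
      have hz2 : ν (symmDiff B C) = 0 :=
        le_antisymm (hz ▸ measure_mono symmDiff_le_sup) zero_le
      have h1 : m (symmDiff B C) ≤ Real.exp ζ * n (symmDiff B C) :=
        hmn _ ((hB.symmDiff hC))
      have hz3 : n (symmDiff B C) = 0 := by rw [hn]; simp [hz2]
      rw [hz3] at h1
      have : (0:ℝ) ≤ 2 * Real.exp (2*ζ) * c * m (A ∪ C) := by positivity
      linarith
  -- triangle for symmetric difference
  have htri : m (symmDiff A C) ≤ m (symmDiff A B) + m (symmDiff B C) :=
    le_trans (hmmono (symmDiff_triangle A B C)) (hmsub _ _)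
  have hLHS : disc μ A C = m (symmDiff A C) / m (A ∪ C) := by
    unfold disc; rw [if_pos ⟨hAC, measure_lt_top μ _⟩]
  rw [hLHS, div_le_iff₀ hACpos]
  nlinarith
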